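/- The shuffle identity for signatures: for a continuous bounded-variation path X and multi-indices α, β, the product of signature coefficients satisfies S(X)^α · S(X)^β = Σ_{γ ∈ α ⧢ β} S(X)^γ, where the sum is over all shuffles of α and β. -/

import Mathlib

open MeasureTheory intervalIntegral

/-- Iterated-integral signature coefficient of a path `X : ℝ → (Fin d → ℝ)` over `[a, b]`. -/
noncomputable def sig {d : ℕ} (X : ℝ → Fin d → ℝ) : List (Fin d) → ℝ → ℝ → ℝ
  | [], _, _ => 1
  | a :: w, s, t => ∫ u in s..t, deriv (fun r => X r a) u * sig X w u t
/-- The multiset of shuffles of two words. -/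
def shuffles {α : Type*} : List α → List α → Multiset (List α)
  | [], l => {l}
  | a :: as, [] => {a :: as}
  | a :: as, b :: bs =>
      ((shuffles as (b :: bs)).map (List.cons a)) + ((shuffles (a :: as) bs).map (List.cons b))

lemma integral_hasDerivAt_left' {g : ℝ → ℝ} (hg : Continuous g) (t s : ℝ) :
    HasDerivAt (fun s => ∫ u in s..t, g u) (-g s) s := by
  have h : HasDerivAt (fun s => ∫ u in t..s, g u) (g s) s :=
    intervalIntegral.integral_hasDerivAt_right (hg.intervalIntegrable _ _)
      (hg.stronglyMeasurableAtFilter _ _) hg.continuousAt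
  have heq : (fun s => ∫ u in s..t, g u) = fun s => -∫ u in t..s, g u := by
    funext s; rw [intervalIntegral.integral_symm]
  rw [heq]
  exact h.neg

lemma sig_cont {d : ℕ} (X : ℝ → Fin d → ℝ) (hX : ∀ a : Fin d, ContDiff ℝ 1 (fun t => X t a)) :
    ∀ (w : List (Fin d)) (t : ℝ), Continuous fun s => sig X w s t := by
  intro w
  induction w with
  | nil => intro t; simpa [sig] using continuous_const
  | cons a w ih =>
    intro t
    have hg : Continuous fun u => deriv (fun r => X r a) u * sig X w u t :=
      ((hX a).continuous_deriv le_rfl).mul (ih t)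
    have : Continuous fun s => ∫ u in s..t, deriv (fun r => X r a) u * sig X w u t := by
      rw [continuous_iff_continuousAt]
      intro s
      exact (integral_hasDerivAt_left' hg t s).continuousAt
    simpa [sig] using this

lemma sig_hasDerivAt {d : ℕ} (X : ℝ → Fin d → ℝ)
    (hX : ∀ a : Fin d, ContDiff ℝ 1 (fun t => X t a)) (a : Fin d) (w : List (Fin d)) (t s : ℝ) :
    HasDerivAt (fun s => sig X (a :: w) s t)
      (-(deriv (fun r => X r a) s * sig X w s t)) s := by
  have hg : Continuous fun u => deriv (fun r => X r a) u * sig X w u t :=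
    ((hX a).continuous_deriv le_rfl).mul (sig_cont X hX w t)
  simpa [sig] using integral_hasDerivAt_left' hg t s

lemma multiset_sum_cont {ι : Type*} (m : Multiset ι) (F : ι → ℝ → ℝ)
    (hF : ∀ i, Continuous (F i)) : Continuous fun u => (m.map fun i => F i u).sum := by
  induction m using Multiset.induction_on with
  | empty => simpa using continuous_const
  | cons i m ih =>
    have h' : Continuous fun u => F i u + (m.map fun i => F i u).sum := (hF i).add ih
    simpa using h'

lemma multiset_sum_integral {ι : Type*} (m : Multiset ι) (F : ι → ℝ → ℝ)
    (hF : ∀ i, Continuous (F i)) (s t : ℝ) :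
    (m.map fun i => ∫ u in s..t, F i u).sum = ∫ u in s..t, (m.map fun i => F i u).sum := by
  induction m using Multiset.induction_on with
  | empty => simp
  | cons i m ih =>
    simp only [Multiset.map_cons, Multiset.sum_cons, ih]
    rw [← intervalIntegral.integral_add ((hF i).intervalIntegrable _ _)
      ((multiset_sum_cont m F hF).intervalIntegrable _ _)]

lemma sig_mul {d : ℕ} (X : ℝ → Fin d → ℝ)
    (hX : ∀ a : Fin d, ContDiff ℝ 1 (fun t => X t a)) :
    ∀ (α β : List (Fin d)) (s t : ℝ),
      sig X α s t * sig X β s t = ((shuffles α β).map fun w => sig X w s t).sum := by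
  intro α
  induction α with
  | nil => intro β s t; simp [shuffles, sig]
  | cons a as ihα =>
    intro β
    induction β with
    | nil => intro s t; simp [shuffles, sig]
    | cons b bs ihβ =>
      intro s t
      set Da := deriv fun r => X r a with hDa
      set Db := deriv fun r => X r b with hDb
      have hDac : Continuous Da := (hX a).continuous_deriv le_rfl
      have hDbc : Continuous Db := (hX b).continuous_deriv le_rfl
      -- the integrand of the integral representation of the shuffle sum
      set G : ℝ → ℝ := fun u =>
        Da u * (sig X as u t * sig X (b :: bs) u t)
          + Db u * (sig X (a :: as) u t * sig X bs u t) with hG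
      have hGc : Continuous G :=
        (hDac.mul ((sig_cont X hX as t).mul (sig_cont X hX (b :: bs) t))).add
          (hDbc.mul ((sig_cont X hX (a :: as) t).mul (sig_cont X hX bs t)))
      -- the shuffle sum equals ∫ u in s..t, G u
      have hsum : ∀ s : ℝ,
          ((shuffles (a :: as) (b :: bs)).map fun w => sig X w s t).sum
            = ∫ u in s..t, G u := by
        intro s
        have h1 : ((shuffles as (b :: bs)).map fun γ => sig X (a :: γ) s t).sum
            = ∫ u in s..t, Da u * (sig X as u t * sig X (b :: bs) u t) := by
          have := multiset_sum_integral (shuffles as (b :: bs))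
            (fun γ u => Da u * sig X γ u t)
            (fun γ => hDac.mul (sig_cont X hX γ t)) s t
          have h2 : ((shuffles as (b :: bs)).map fun γ => sig X (a :: γ) s t).sum
              = ((shuffles as (b :: bs)).map fun γ => ∫ u in s..t, Da u * sig X γ u t).sum := by
            rfl
          rw [h2, this]
          congr 1
          funext u
          rw [ihα (b :: bs) u t, ← Multiset.sum_map_mul_left]
        have h1' : ((shuffles (a :: as) bs).map fun γ => sig X (b :: γ) s t).sum
            = ∫ u in s..t, Db u * (sig X (a :: as) u t * sig X bs u t) := by
          have := multiset_sum_integral (shuffles (a :: as) bs)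
            (fun γ u => Db u * sig X γ u t)
            (fun γ => hDbc.mul (sig_cont X hX γ t)) s t
          have h2 : ((shuffles (a :: as) bs).map fun γ => sig X (b :: γ) s t).sum
              = ((shuffles (a :: as) bs).map fun γ => ∫ u in s..t, Db u * sig X γ u t).sum := by
            rfl
          rw [h2, this]
          congr 1
          funext u
          rw [ihβ u t, ← Multiset.sum_map_mul_left]
        have hsplit : ((shuffles (a :: as) (b :: bs)).map fun w => sig X w s t).sum
            = ((shuffles as (b :: bs)).map fun γ => sig X (a :: γ) s t).sum
              + ((shuffles (a :: as) bs).map fun γ => sig X (b :: γ) s t).sum := by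
          simp [shuffles, Multiset.map_map, Function.comp]
        rw [hsplit, h1, h1', hG,
          ← intervalIntegral.integral_add
            (f := fun u => Da u * (sig X as u t * sig X (b :: bs) u t))
            (g := fun u => Db u * (sig X (a :: as) u t * sig X bs u t))
            ((hDac.mul ((sig_cont X hX as t).mul (sig_cont X hX (b :: bs) t))).intervalIntegrable _ _)
            ((hDbc.mul ((sig_cont X hX (a :: as) t).mul (sig_cont X hX bs t))).intervalIntegrable _ _)]
      -- the difference function
      set h : ℝ → ℝ := fun s =>
        sig X (a :: as) s t * sig X (b :: bs) s t - ∫ u in s..t, G u with hh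
      have hderiv : ∀ s : ℝ, HasDerivAt h 0 s := by
        intro s
        have h1 : HasDerivAt (fun s => sig X (a :: as) s t * sig X (b :: bs) s t)
            ((-(Da s * sig X as s t)) * sig X (b :: bs) s t
              + sig X (a :: as) s t * (-(Db s * sig X bs s t))) s :=
          (sig_hasDerivAt X hX a as t s).mul (sig_hasDerivAt X hX b bs t s)
        have h2 : HasDerivAt (fun s => ∫ u in s..t, G u) (-G s) s :=
          integral_hasDerivAt_left' hGc t s
        have : HasDerivAt (fun s => sig X (a :: as) s t * sig X (b :: bs) s t - ∫ u in s..t, G u) _ s :=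
          h1.sub h2
        convert this using 1
        simp only [hG]
        ring
      have hdiff : Differentiable ℝ h := fun s => (hderiv s).differentiableAt
      have hconst : ∀ s : ℝ, h s = h t := by
        intro s
        exact is_const_of_deriv_eq_zero hdiff (fun x => (hderiv x).deriv) s t
      have ht0 : h t = 0 := by
        simp [hh, sig, intervalIntegral.integral_same]
      have h0 : h s = 0 := (hconst s).trans ht0
      have hfs : sig X (a :: as) s t * sig X (b :: bs) s t = ∫ u in s..t, G u := by
        simp only [hh] at h0
        linarith
      rw [hfs, hsum s]

/-- The shuffle identity for signatures: `S(X)^α · S(X)^β = Σ_{γ ∈ α ⧢ β} S(X)^γ`. -/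
theorem signature_shuffle_identity {d : ℕ} (T : ℝ) (hT : 0 ≤ T)
    (X : ℝ → Fin d → ℝ) (hX : ∀ a : Fin d, ContDiff ℝ 1 (fun t => X t a))
    (α β : List (Fin d)) :
    sig X α 0 T * sig X β 0 T
      = ((shuffles α β).map (fun w => sig X w 0 T)).sum := by
  exact sig_mul X hX α β 0 T
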